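/- Let ρ be a viable ranking of S^m and for w ∈ ℝ₊^I define recursively q*_{ρ(1)}(w) = μ_{ρ(1)} min_{i ∈ N_{ρ(1)}} w_i, then for k ≥ 2, q*_{ρ(k)}(w) = μ_{ρ(k)} min_{i ∈ N_{ρ(k)}} (w_i − ∑_{l<k} G_{i,ρ(l)} q*_{ρ(l)}(w)), and for j ∈ S¹ with unique resource î(j), q*_j(w) = μ_j (w_{î(j)} − ∑_{k=1}^m G_{î(j),ρ(k)} q*_{ρ(k)}(w)); set q*_j(w) = 0 for j ∈ S^p. Then q*(w) ≥ 0 componentwise, for all w ∈ ℝ₊^I. -/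

import Mathlib

/-- Nonnegativity of the greedy recursive selection `q*`. -/
theorem stmt_12 (I J m : ℕ) (K : Matrix (Fin I) (Fin J) ℝ)
    (hK01 : ∀ i j, K i j = 0 ∨ K i j = 1)
    (hKnz : ∀ j, ∃ i, K i j = 1)
    (μ : Fin J → ℝ) (hμ : ∀ j, 0 < μ j)
    (G : Matrix (Fin I) (Fin J) ℝ) (hG : ∀ i j, G i j = K i j / μ j)
    (Sp : Finset (Fin J))
    (ρ : Fin m → Fin J) (hρinj : Function.Injective ρ)
    (hρSp : ∀ k : Fin m, ρ k ∉ Sp)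
    (ihat : Fin J → Fin I)
    (hihat : ∀ j, (∑ i, K i j) = 1 → K (ihat j) j = 1)
    (hpart : ∀ j : Fin J, j ∈ Sp ∨ (∃ k : Fin m, ρ k = j) ∨ (∑ i, K i j) = 1)
    (qs : (Fin I → ℝ) → Fin J → ℝ)
    (hqsP : ∀ w, ∀ j ∈ Sp, qs w j = 0)
    (hqsM : ∀ w : Fin I → ℝ, ∀ k : Fin m, qs w (ρ k) =
      μ (ρ k) * sInf {x : ℝ | ∃ i : Fin I, K i (ρ k) = 1 ∧
        x = w i - ∑ l ∈ Finset.univ.filter (fun l : Fin m => l < k),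
              G i (ρ l) * qs w (ρ l)})
    (hqsS : ∀ w : Fin I → ℝ, ∀ j : Fin J, j ∉ Sp → (∀ k : Fin m, ρ k ≠ j) →
      (∑ i, K i j) = 1 →
      qs w j = μ j * (w (ihat j) - ∑ k : Fin m, G (ihat j) (ρ k) * qs w (ρ k))) :
    ∀ w : Fin I → ℝ, (∀ i, 0 ≤ w i) → ∀ j, 0 ≤ qs w j := by
  intro w hw
  -- residuals
  set R : Fin I → ℕ → ℝ := fun i n =>
    w i - ∑ l ∈ Finset.univ.filter (fun l : Fin m => (l : ℕ) < n),
      G i (ρ l) * qs w (ρ l) with hR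
  have hfilt : ∀ k : Fin m,
      (Finset.univ.filter (fun l : Fin m => l < k)) =
      (Finset.univ.filter (fun l : Fin m => (l : ℕ) < (k : ℕ))) := by
    intro k; apply Finset.filter_congr; intro l _; exact Iff.rfl
  have key : ∀ n : ℕ, ∀ i : Fin I, 0 ≤ R i n := by
    intro n
    induction n with
    | zero => intro i; simpa [hR] using hw i
    | succ n ih =>
      intro i
      by_cases hnm : n < m
      · set k : Fin m := ⟨n, hnm⟩ with hk
        have hins : (Finset.univ.filter (fun l : Fin m => (l : ℕ) < n + 1)) =
            insert k (Finset.univ.filter (fun l : Fin m => (l : ℕ) < n)) := by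
          ext l
          simp only [Finset.mem_filter, Finset.mem_insert, Finset.mem_univ, true_and]
          constructor
          · intro hl
            rcases Nat.lt_succ_iff_lt_or_eq.mp hl with h | h
            · exact Or.inr h
            · exact Or.inl (Fin.ext h)
          · rintro (rfl | h)
            · exact Nat.lt_succ_self n
            · exact Nat.lt_succ_of_lt h
        have hknot : k ∉ (Finset.univ.filter (fun l : Fin m => (l : ℕ) < n)) := by
          simp [hk]
        have hsum : R i (n + 1) = R i n - G i (ρ k) * qs w (ρ k) := by
          simp only [hR, hins, Finset.sum_insert hknot]; ring
        -- the inf set at step k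
        set A : Set ℝ := {x : ℝ | ∃ i : Fin I, K i (ρ k) = 1 ∧
          x = w i - ∑ l ∈ Finset.univ.filter (fun l : Fin m => l < k),
                G i (ρ l) * qs w (ρ l)} with hA
        have hmem : ∀ i' : Fin I, K i' (ρ k) = 1 → (R i' n) ∈ A := by
          intro i' hi'
          refine ⟨i', hi', ?_⟩
          rw [hfilt k]
        have hAne : A.Nonempty := by
          obtain ⟨i0, hi0⟩ := hKnz (ρ k)
          exact ⟨R i0 n, hmem i0 hi0⟩
        have hlb : ∀ x ∈ A, (0:ℝ) ≤ x := by
          rintro x ⟨i', hi', rfl⟩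
          have := ih i'
          rw [hfilt k]; exact this
        have hbdd : BddBelow A := ⟨0, hlb⟩
        have hInf0 : 0 ≤ sInf A := le_csInf hAne hlb
        have hqk : qs w (ρ k) = μ (ρ k) * sInf A := by
          rw [hqsM w k]
        rcases hK01 i (ρ k) with h0 | h1
        · have : G i (ρ k) = 0 := by simp [hG, h0]
          rw [hsum, this]; simpa using ih i
        · have hGi : G i (ρ k) = 1 / μ (ρ k) := by simp [hG, h1]
          have hle : sInf A ≤ R i n := csInf_le hbdd (hmem i h1)
          have hμk := hμ (ρ k)
          rw [hsum, hqk, hGi]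
          have : 1 / μ (ρ k) * (μ (ρ k) * sInf A) = sInf A := by
            field_simp
          rw [this]
          linarith
      · -- n ≥ m : filter unchanged
        have heq : (Finset.univ.filter (fun l : Fin m => (l : ℕ) < n + 1)) =
            (Finset.univ.filter (fun l : Fin m => (l : ℕ) < n)) := by
          apply Finset.filter_congr; intro l _
          have hl := l.isLt
          have h1 : (l : ℕ) < n := lt_of_lt_of_le hl (Nat.le_of_not_lt hnm)
          simp [h1, Nat.lt_succ_of_lt h1]
        have : R i (n + 1) = R i n := by simp only [hR, heq]
        rw [this]; exact ih i
  intro j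
  by_cases hjSp : j ∈ Sp
  · rw [hqsP w j hjSp]
  · by_cases hjρ : ∃ k : Fin m, ρ k = j
    · obtain ⟨k, rfl⟩ := hjρ
      rw [hqsM w k]
      have hAne : {x : ℝ | ∃ i : Fin I, K i (ρ k) = 1 ∧
          x = w i - ∑ l ∈ Finset.univ.filter (fun l : Fin m => l < k),
                G i (ρ l) * qs w (ρ l)}.Nonempty := by
        obtain ⟨i0, hi0⟩ := hKnz (ρ k)
        exact ⟨_, i0, hi0, rfl⟩
      have hlb : ∀ x ∈ {x : ℝ | ∃ i : Fin I, K i (ρ k) = 1 ∧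
          x = w i - ∑ l ∈ Finset.univ.filter (fun l : Fin m => l < k),
                G i (ρ l) * qs w (ρ l)}, (0:ℝ) ≤ x := by
        rintro x ⟨i', hi', rfl⟩
        have := key (k : ℕ) i'
        simpa [hR, hfilt k] using this
      exact mul_nonneg (le_of_lt (hμ (ρ k))) (le_csInf hAne hlb)
    · have hsum1 : (∑ i, K i j) = 1 := by
        rcases hpart j with h | h | h
        · exact absurd h hjSp
        · exact absurd h hjρ
        · exact h
      rw [hqsS w j hjSp (fun k hk => hjρ ⟨k, hk⟩) hsum1]
      have huniv : (Finset.univ.filter (fun l : Fin m => (l : ℕ) < m)) =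
          (Finset.univ : Finset (Fin m)) := by
        apply Finset.filter_true_of_mem; intro l _; exact l.isLt
      have := key m (ihat j)
      rw [hR] at this
      simp only [huniv] at this
      exact mul_nonneg (le_of_lt (hμ j)) this
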